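/- arXiv:0808.3056 — 4 statements merged into one kernel-verified Lean document; each statement's English description precedes it below -/
import Mathlib

section
/- The symmetrization identity: for an indeterminate q with q ≠ 0 and q² ≠ 1, and variables z₁, z₂, z₃, the sum over all permutations σ ∈ S₃ of σ.( (q⁻³z₁² − (q+q⁻¹)z₂² + q³z₃²) · ∏_{i<j} (z_i − q⁻²z_j)/(z_i − z_j) ) equals 0, where σ acts by permuting the indices of the variables z₁, z₂, z₃. -/
set_option maxHeartbeats 1000000 in
theorem aux6_symmetrization {F : Type*} [Field F] (q a b c : F) (hq : q ≠ 0) :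
    (q⁻¹ ^ 3 * a ^ 2 - (q + q⁻¹) * b ^ 2 + q ^ 3 * c ^ 2) *
        ((a - q⁻¹ ^ 2 * b) / (a - b) * ((a - q⁻¹ ^ 2 * c) / (a - c)) * ((b - q⁻¹ ^ 2 * c) / (b - c)))
    + (q⁻¹ ^ 3 * b ^ 2 - (q + q⁻¹) * a ^ 2 + q ^ 3 * c ^ 2) *
        ((b - q⁻¹ ^ 2 * a) / (b - a) * ((b - q⁻¹ ^ 2 * c) / (b - c)) * ((a - q⁻¹ ^ 2 * c) / (a - c)))
    + (q⁻¹ ^ 3 * c ^ 2 - (q + q⁻¹) * b ^ 2 + q ^ 3 * a ^ 2) *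
        ((c - q⁻¹ ^ 2 * b) / (c - b) * ((c - q⁻¹ ^ 2 * a) / (c - a)) * ((b - q⁻¹ ^ 2 * a) / (b - a)))
    + (q⁻¹ ^ 3 * a ^ 2 - (q + q⁻¹) * c ^ 2 + q ^ 3 * b ^ 2) *
        ((a - q⁻¹ ^ 2 * c) / (a - c) * ((a - q⁻¹ ^ 2 * b) / (a - b)) * ((c - q⁻¹ ^ 2 * b) / (c - b)))
    + (q⁻¹ ^ 3 * b ^ 2 - (q + q⁻¹) * c ^ 2 + q ^ 3 * a ^ 2) *
        ((b - q⁻¹ ^ 2 * c) / (b - c) * ((b - q⁻¹ ^ 2 * a) / (b - a)) * ((c - q⁻¹ ^ 2 * a) / (c - a)))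
    + (q⁻¹ ^ 3 * c ^ 2 - (q + q⁻¹) * a ^ 2 + q ^ 3 * b ^ 2) *
        ((c - q⁻¹ ^ 2 * a) / (c - a) * ((c - q⁻¹ ^ 2 * b) / (c - b)) * ((a - q⁻¹ ^ 2 * b) / (a - b)))
    = 0 := by
  have key : ∀ A x y w d1 d2 d3 : F, A * (x / d1 * (y / d2) * (w / d3)) =
      (A * (x * y * w)) / (d1 * d2 * d3) := by
    intros A x y w d1 d2 d3
    rw [div_mul_div_comm, div_mul_div_comm, mul_div_assoc']
  rw [key, key, key, key, key, key,
    show (b-a)*(b-c)*(a-c) = -((a-b)*(a-c)*(b-c)) by ring,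
    show (c-b)*(c-a)*(b-a) = -((a-b)*(a-c)*(b-c)) by ring,
    show (a-c)*(a-b)*(c-b) = -((a-b)*(a-c)*(b-c)) by ring,
    show (b-c)*(b-a)*(c-a) = (a-b)*(a-c)*(b-c) by ring,
    show (c-a)*(c-b)*(a-b) = (a-b)*(a-c)*(b-c) by ring,
    div_neg, div_neg, div_neg, ← neg_div, ← neg_div, ← neg_div, ← add_div,
    ← add_div, ← add_div, ← add_div, ← add_div, div_eq_zero_iff]
  left
  field_simp
  ring

/-- The symmetrization identity
`∑_{σ ∈ S₃} σ.((q⁻³z₁² − (q+q⁻¹)z₂² + q³z₃²) · ∏_{i<j} (z_i − q⁻²z_j)/(z_i − z_j)) = 0`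
in a field of characteristic zero, where `σ` permutes the variables `z₁, z₂, z₃`. -/
theorem symmetrization_identity {F : Type*} [Field F] [CharZero F]
    (q : F) (hq : q ≠ 0) (hq2 : q ^ 2 ≠ 1)
    (z : Fin 3 → F) (hz : Function.Injective z) :
    ∑ σ : Equiv.Perm (Fin 3),
      (q⁻¹ ^ 3 * (z (σ 0)) ^ 2 - (q + q⁻¹) * (z (σ 1)) ^ 2 + q ^ 3 * (z (σ 2)) ^ 2) *
        ((z (σ 0) - q⁻¹ ^ 2 * z (σ 1)) / (z (σ 0) - z (σ 1)) *
         ((z (σ 0) - q⁻¹ ^ 2 * z (σ 2)) / (z (σ 0) - z (σ 2))) *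
         ((z (σ 1) - q⁻¹ ^ 2 * z (σ 2)) / (z (σ 1) - z (σ 2)))) = 0 := by
  have key : (Finset.univ : Finset (Equiv.Perm (Fin 3))) =
      {Equiv.refl _, Equiv.swap 0 1, Equiv.swap 0 2, Equiv.swap 1 2,
       Equiv.swap 0 1 * Equiv.swap 1 2, Equiv.swap 1 2 * Equiv.swap 0 1} := by decide
  rw [key, Finset.sum_insert (by decide), Finset.sum_insert (by decide),
    Finset.sum_insert (by decide), Finset.sum_insert (by decide), Finset.sum_pair (by decide)]
  simp only [
    show (Equiv.refl (Fin 3)) 0 = 0 from rfl,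
    show (Equiv.refl (Fin 3)) 1 = 1 from rfl,
    show (Equiv.refl (Fin 3)) 2 = 2 from rfl,
    show (Equiv.swap 0 1 : Equiv.Perm (Fin 3)) 0 = 1 from rfl,
    show (Equiv.swap 0 1 : Equiv.Perm (Fin 3)) 1 = 0 from rfl,
    show (Equiv.swap 0 1 : Equiv.Perm (Fin 3)) 2 = 2 from rfl,
    show (Equiv.swap 0 2 : Equiv.Perm (Fin 3)) 0 = 2 from rfl,
    show (Equiv.swap 0 2 : Equiv.Perm (Fin 3)) 1 = 1 from rfl,
    show (Equiv.swap 0 2 : Equiv.Perm (Fin 3)) 2 = 0 from rfl,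
    show (Equiv.swap 1 2 : Equiv.Perm (Fin 3)) 0 = 0 from rfl,
    show (Equiv.swap 1 2 : Equiv.Perm (Fin 3)) 1 = 2 from rfl,
    show (Equiv.swap 1 2 : Equiv.Perm (Fin 3)) 2 = 1 from rfl,
    show ((Equiv.swap 0 1 * Equiv.swap 1 2 : Equiv.Perm (Fin 3))) 0 = 1 from rfl,
    show ((Equiv.swap 0 1 * Equiv.swap 1 2 : Equiv.Perm (Fin 3))) 1 = 2 from rfl,
    show ((Equiv.swap 0 1 * Equiv.swap 1 2 : Equiv.Perm (Fin 3))) 2 = 0 from rfl,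
    show ((Equiv.swap 1 2 * Equiv.swap 0 1 : Equiv.Perm (Fin 3))) 0 = 2 from rfl,
    show ((Equiv.swap 1 2 * Equiv.swap 0 1 : Equiv.Perm (Fin 3))) 1 = 0 from rfl,
    show ((Equiv.swap 1 2 * Equiv.swap 0 1 : Equiv.Perm (Fin 3))) 2 = 1 from rfl]
  linear_combination aux6_symmetrization q (z 0) (z 1) (z 2) hq
end

section
/- The Hall–Littlewood-type identity: for variables w, z₁, z₂, z₃ and parameter q, the symmetrization over S₃ (acting on z₁,z₂,z₃) of [ ∏ᵢ(w²+q⁻²zᵢ²) − [3]·(w²+q⁻²z₁²)(w²+q⁻²z₂²)(z₃²+q⁻²w²) + [3]·(w²+q⁻²z₁²)(z₂²+q⁻²w²)(z₃²+q⁻²w²) − ∏ᵢ(zᵢ²+q⁻²w²) ] · ∏_{i<j}(z_i−q⁻²z_j)/(z_i−z_j) equals 0, where [3] = q² + 1 + q⁻². -/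
set_option maxHeartbeats 16000000

/-- Hall–Littlewood-type identity (Lemma 3.4 of the paper).
The symmetrization over `S₃` (acting on `z₁,z₂,z₃`) of the bracketed expression times
`∏_{i<j}(z_i−q⁻²z_j)/(z_i−z_j)` vanishes, where `[3] = q² + 1 + q⁻²`. -/
theorem hall_littlewood_type_identity {F : Type*} [Field F] [CharZero F]
    (q : F) (hq : q ≠ 0) (w : F)
    (z : Fin 3 → F) (hz : Function.Injective z) :
    ∑ σ : Equiv.Perm (Fin 3),
      (((w ^ 2 + q⁻¹ ^ 2 * (z (σ 0)) ^ 2) * (w ^ 2 + q⁻¹ ^ 2 * (z (σ 1)) ^ 2) *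
          (w ^ 2 + q⁻¹ ^ 2 * (z (σ 2)) ^ 2)
        - (q ^ 2 + 1 + q⁻¹ ^ 2) *
          ((w ^ 2 + q⁻¹ ^ 2 * (z (σ 0)) ^ 2) * (w ^ 2 + q⁻¹ ^ 2 * (z (σ 1)) ^ 2) *
           ((z (σ 2)) ^ 2 + q⁻¹ ^ 2 * w ^ 2))
        + (q ^ 2 + 1 + q⁻¹ ^ 2) *
          ((w ^ 2 + q⁻¹ ^ 2 * (z (σ 0)) ^ 2) * ((z (σ 1)) ^ 2 + q⁻¹ ^ 2 * w ^ 2) *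
           ((z (σ 2)) ^ 2 + q⁻¹ ^ 2 * w ^ 2))
        - ((z (σ 0)) ^ 2 + q⁻¹ ^ 2 * w ^ 2) * ((z (σ 1)) ^ 2 + q⁻¹ ^ 2 * w ^ 2) *
          ((z (σ 2)) ^ 2 + q⁻¹ ^ 2 * w ^ 2)) *
       ((z (σ 0) - q⁻¹ ^ 2 * z (σ 1)) / (z (σ 0) - z (σ 1)) *
        ((z (σ 0) - q⁻¹ ^ 2 * z (σ 2)) / (z (σ 0) - z (σ 2))) *
        ((z (σ 1) - q⁻¹ ^ 2 * z (σ 2)) / (z (σ 1) - z (σ 2))))) = 0 := by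
  have h01 : z 0 - z 1 ≠ 0 := sub_ne_zero.mpr (fun h => absurd (hz h) (by decide))
  have h02 : z 0 - z 2 ≠ 0 := sub_ne_zero.mpr (fun h => absurd (hz h) (by decide))
  have h12 : z 1 - z 2 ≠ 0 := sub_ne_zero.mpr (fun h => absurd (hz h) (by decide))
  have h10 : z 1 - z 0 ≠ 0 := sub_ne_zero.mpr (fun h => absurd (hz h) (by decide))
  have h20 : z 2 - z 0 ≠ 0 := sub_ne_zero.mpr (fun h => absurd (hz h) (by decide))
  have h21 : z 2 - z 1 ≠ 0 := sub_ne_zero.mpr (fun h => absurd (hz h) (by decide))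
  have huniv : (Finset.univ : Finset (Equiv.Perm (Fin 3))) =
      {1, Equiv.swap 0 1, Equiv.swap 0 2, Equiv.swap 1 2,
       Equiv.swap 0 1 * Equiv.swap 1 2, Equiv.swap 1 2 * Equiv.swap 0 1} := by decide
  rw [huniv, Finset.sum_insert (by decide), Finset.sum_insert (by decide),
    Finset.sum_insert (by decide), Finset.sum_insert (by decide),
    Finset.sum_insert (by decide), Finset.sum_singleton]
  have e1 : ∀ i, (1 : Equiv.Perm (Fin 3)) i = i := fun i => rfl
  have eA0 : (Equiv.swap (0:Fin 3) 1) 0 = 1 := by decide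
  have eA1 : (Equiv.swap (0:Fin 3) 1) 1 = 0 := by decide
  have eA2 : (Equiv.swap (0:Fin 3) 1) 2 = 2 := by decide
  have eB0 : (Equiv.swap (0:Fin 3) 2) 0 = 2 := by decide
  have eB1 : (Equiv.swap (0:Fin 3) 2) 1 = 1 := by decide
  have eB2 : (Equiv.swap (0:Fin 3) 2) 2 = 0 := by decide
  have eC0 : (Equiv.swap (1:Fin 3) 2) 0 = 0 := by decide
  have eC1 : (Equiv.swap (1:Fin 3) 2) 1 = 2 := by decide
  have eC2 : (Equiv.swap (1:Fin 3) 2) 2 = 1 := by decide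
  have eD0 : ((Equiv.swap 0 1 * Equiv.swap 1 2 : Equiv.Perm (Fin 3))) 0 = 1 := by decide
  have eD1 : ((Equiv.swap 0 1 * Equiv.swap 1 2 : Equiv.Perm (Fin 3))) 1 = 2 := by decide
  have eD2 : ((Equiv.swap 0 1 * Equiv.swap 1 2 : Equiv.Perm (Fin 3))) 2 = 0 := by decide
  have eE0 : ((Equiv.swap 1 2 * Equiv.swap 0 1 : Equiv.Perm (Fin 3))) 0 = 2 := by decide
  have eE1 : ((Equiv.swap 1 2 * Equiv.swap 0 1 : Equiv.Perm (Fin 3))) 1 = 0 := by decide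
  have eE2 : ((Equiv.swap 1 2 * Equiv.swap 0 1 : Equiv.Perm (Fin 3))) 2 = 1 := by decide
  rw [e1, e1, e1, eA0, eA1, eA2, eB0, eB1, eB2, eC0, eC1, eC2,
    eD0, eD1, eD2, eE0, eE1, eE2]
  rw [show z 1 - z 0 = -(z 0 - z 1) from by ring, show z 2 - z 0 = -(z 0 - z 2) from by ring,
    show z 2 - z 1 = -(z 1 - z 2) from by ring]
  simp only [div_neg, neg_div, div_mul_div_comm, ← mul_div_assoc, neg_neg, mul_neg, neg_mul]
  have key : ∀ (B n1 n2 n3 dA dB dC : F), dA ≠ 0 → dB ≠ 0 → dC ≠ 0 →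
      B * (n1 / dA * n2 / dB * n3) / dC = B * n1 * n2 * n3 / (dA * dB * dC) := by
    intro B n1 n2 n3 dA dB dC hA hB hC
    field_simp
  simp only [key _ _ _ _ _ _ _ h01 h02 h12, key _ _ _ _ _ _ _ h01 h12 h02,
    key _ _ _ _ _ _ _ h12 h02 h01, key _ _ _ _ _ _ _ h02 h01 h12,
    key _ _ _ _ _ _ _ h12 h01 h02, key _ _ _ _ _ _ _ h02 h12 h01]
  have hΔ : (z 0 - z 1) * (z 0 - z 2) * (z 1 - z 2) ≠ 0 := mul_ne_zero (mul_ne_zero h01 h02) h12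
  have r1 : (z 0 - z 1) * (z 1 - z 2) * (z 0 - z 2) = (z 0 - z 1) * (z 0 - z 2) * (z 1 - z 2) := by ring
  have r2 : (z 1 - z 2) * (z 0 - z 2) * (z 0 - z 1) = (z 0 - z 1) * (z 0 - z 2) * (z 1 - z 2) := by ring
  have r3 : (z 0 - z 2) * (z 0 - z 1) * (z 1 - z 2) = (z 0 - z 1) * (z 0 - z 2) * (z 1 - z 2) := by ring
  have r4 : (z 1 - z 2) * (z 0 - z 1) * (z 0 - z 2) = (z 0 - z 1) * (z 0 - z 2) * (z 1 - z 2) := by ring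
  have r5 : (z 0 - z 2) * (z 1 - z 2) * (z 0 - z 1) = (z 0 - z 1) * (z 0 - z 2) * (z 1 - z 2) := by ring
  rw [r1, r2, r3, r4, r5]
  simp only [← neg_div, ← add_div]
  rw [div_eq_zero_iff]
  left
  linear_combination (-((z 0) ^ 2*(z 1) ^ 3*(z 2) ^ 4) + (z 0) ^ 2*(z 1) ^ 4*(z 2) ^ 3 + (z 0) ^ 3*(z 1) ^ 2*(z 2) ^ 4 - ((z 0) ^ 3*(z 1) ^ 4*(z 2) ^ 2) - ((z 0) ^ 4*(z 1) ^ 2*(z 2) ^ 3) + (z 0) ^ 4*(z 1) ^ 3*(z 2) ^ 2 + w ^ 6*(z 1)*(z 2) ^ 2 - (w ^ 6*(z 1) ^ 2*(z 2)) - (w ^ 6*(z 0)*(z 2) ^ 2) + w ^ 6*(z 0)*(z 1) ^ 2 + w ^ 6*(z 0) ^ 2*(z 2) - (w ^ 6*(z 0) ^ 2*(z 1)) - (q⁻¹*q*(z 0) ^ 2*(z 1) ^ 3*(z 2) ^ 4) + q⁻¹*q*(z 0) ^ 2*(z 1) ^ 4*(z 2) ^ 3 + q⁻¹*q*(z 0)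 ^ 3*(z 1) ^ 2*(z 2) ^ 4 - (q⁻¹*q*(z 0) ^ 3*(z 1) ^ 4*(z 2) ^ 2) - (q⁻¹*q*(z 0) ^ 4*(z 1) ^ 2*(z 2) ^ 3) + q⁻¹*q*(z 0) ^ 4*(z 1) ^ 3*(z 2) ^ 2 + q⁻¹*q*w ^ 6*(z 1)*(z 2) ^ 2 - (q⁻¹*q*w ^ 6*(z 1) ^ 2*(z 2)) - (q⁻¹*q*w ^ 6*(z 0)*(z 2) ^ 2) + q⁻¹*q*w ^ 6*(z 0)*(z 1) ^ 2 + q⁻¹*q*w ^ 6*(z 0) ^ 2*(z 2) - (q⁻¹*q*w ^ 6*(z 0) ^ 2*(z 1)) - (q⁻¹ ^ 2*(z 0) ^ 2*(z 1) ^ 3*(z 2) ^ 4) + q⁻¹ ^ 2*(z 0) ^ 2*(z 1) ^ 4*(z 2) ^ 3 + q⁻¹ ^ 2*(z 0) ^ 3*(z 1) ^ 2*(z 2) ^ 4 - (q⁻¹ ^ 2*(z 0) ^ 3*(z 1) ^ 4*(z 2) ^ 2) - (q⁻¹ ^ 2*(z 0) ^ 4*(z 1) ^ 2*(z 2) ^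 3) + q⁻¹ ^ 2*(z 0) ^ 4*(z 1) ^ 3*(z 2) ^ 2 - (q⁻¹ ^ 2*w ^ 2*(z 1) ^ 3*(z 2) ^ 4) + q⁻¹ ^ 2*w ^ 2*(z 1) ^ 4*(z 2) ^ 3 + q⁻¹ ^ 2*w ^ 2*(z 0)*(z 1) ^ 2*(z 2) ^ 4 - (q⁻¹ ^ 2*w ^ 2*(z 0)*(z 1) ^ 4*(z 2) ^ 2) - (q⁻¹ ^ 2*w ^ 2*(z 0) ^ 2*(z 1)*(z 2) ^ 4) + q⁻¹ ^ 2*w ^ 2*(z 0) ^ 2*(z 1) ^ 4*(z 2) + q⁻¹ ^ 2*w ^ 2*(z 0) ^ 3*(z 2) ^ 4 - (q⁻¹ ^ 2*w ^ 2*(z 0) ^ 3*(z 1) ^ 4) - (q⁻¹ ^ 2*w ^ 2*(z 0) ^ 4*(z 2) ^ 3) + q⁻¹ ^ 2*w ^ 2*(z 0) ^ 4*(z 1)*(z 2) ^ 2 - (q⁻¹ ^ 2*w ^ 2*(z 0) ^ 4*(z 1) ^ 2*(z 2)) + q⁻¹ ^ 2*w ^ 2*(z 0) ^ 4*(z 1)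 ^ 3 + q⁻¹ ^ 2*w ^ 4*(z 1)*(z 2) ^ 4 - (q⁻¹ ^ 2*w ^ 4*(z 1) ^ 2*(z 2) ^ 3) + q⁻¹ ^ 2*w ^ 4*(z 1) ^ 3*(z 2) ^ 2 - (q⁻¹ ^ 2*w ^ 4*(z 1) ^ 4*(z 2)) - (q⁻¹ ^ 2*w ^ 4*(z 0)*(z 2) ^ 4) + q⁻¹ ^ 2*w ^ 4*(z 0)*(z 1) ^ 4 + q⁻¹ ^ 2*w ^ 4*(z 0) ^ 2*(z 2) ^ 3 - (q⁻¹ ^ 2*w ^ 4*(z 0) ^ 2*(z 1) ^ 3) - (q⁻¹ ^ 2*w ^ 4*(z 0) ^ 3*(z 2) ^ 2) + q⁻¹ ^ 2*w ^ 4*(z 0) ^ 3*(z 1) ^ 2 + q⁻¹ ^ 2*w ^ 4*(z 0) ^ 4*(z 2) - (q⁻¹ ^ 2*w ^ 4*(z 0) ^ 4*(z 1)) + q⁻¹ ^ 2*w ^ 6*(z 1)*(z 2) ^ 2 - (q⁻¹ ^ 2*w ^ 6*(z 1) ^ 2*(z 2)) - (q⁻¹ ^ 2*w ^ 6*(z 0)*(z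 2) ^ 2) + q⁻¹ ^ 2*w ^ 6*(z 0)*(z 1) ^ 2 + q⁻¹ ^ 2*w ^ 6*(z 0) ^ 2*(z 2) - (q⁻¹ ^ 2*w ^ 6*(z 0) ^ 2*(z 1)) - (q⁻¹ ^ 3*q*(z 0) ^ 2*(z 1) ^ 3*(z 2) ^ 4) + q⁻¹ ^ 3*q*(z 0) ^ 2*(z 1) ^ 4*(z 2) ^ 3 + q⁻¹ ^ 3*q*(z 0) ^ 3*(z 1) ^ 2*(z 2) ^ 4 - (q⁻¹ ^ 3*q*(z 0) ^ 3*(z 1) ^ 4*(z 2) ^ 2) - (q⁻¹ ^ 3*q*(z 0) ^ 4*(z 1) ^ 2*(z 2) ^ 3) + q⁻¹ ^ 3*q*(z 0) ^ 4*(z 1) ^ 3*(z 2) ^ 2 - (q⁻¹ ^ 3*q*w ^ 2*(z 1) ^ 3*(z 2) ^ 4) + q⁻¹ ^ 3*q*w ^ 2*(z 1) ^ 4*(z 2) ^ 3 + q⁻¹ ^ 3*q*w ^ 2*(z 0)*(z 1) ^ 2*(z 2) ^ 4 - (q⁻¹ ^ 3*q*w ^ 2*(z 0)*(z 1) ^ 4*(z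 2) ^ 2) - (q⁻¹ ^ 3*q*w ^ 2*(z 0) ^ 2*(z 1)*(z 2) ^ 4) + q⁻¹ ^ 3*q*w ^ 2*(z 0) ^ 2*(z 1) ^ 4*(z 2) + q⁻¹ ^ 3*q*w ^ 2*(z 0) ^ 3*(z 2) ^ 4 - (q⁻¹ ^ 3*q*w ^ 2*(z 0) ^ 3*(z 1) ^ 4) - (q⁻¹ ^ 3*q*w ^ 2*(z 0) ^ 4*(z 2) ^ 3) + q⁻¹ ^ 3*q*w ^ 2*(z 0) ^ 4*(z 1)*(z 2) ^ 2 - (q⁻¹ ^ 3*q*w ^ 2*(z 0) ^ 4*(z 1) ^ 2*(z 2)) + q⁻¹ ^ 3*q*w ^ 2*(z 0) ^ 4*(z 1) ^ 3 + q⁻¹ ^ 3*q*w ^ 4*(z 1)*(z 2) ^ 4 - (q⁻¹ ^ 3*q*w ^ 4*(z 1) ^ 2*(z 2) ^ 3) + q⁻¹ ^ 3*q*w ^ 4*(z 1) ^ 3*(z 2) ^ 2 - (q⁻¹ ^ 3*q*w ^ 4*(z 1) ^ 4*(z 2)) - (q⁻¹ ^ 3*q*w ^ 4*(z 0)*(z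 2) ^ 4) + q⁻¹ ^ 3*q*w ^ 4*(z 0)*(z 1) ^ 4 + q⁻¹ ^ 3*q*w ^ 4*(z 0) ^ 2*(z 2) ^ 3 - (q⁻¹ ^ 3*q*w ^ 4*(z 0) ^ 2*(z 1) ^ 3) - (q⁻¹ ^ 3*q*w ^ 4*(z 0) ^ 3*(z 2) ^ 2) + q⁻¹ ^ 3*q*w ^ 4*(z 0) ^ 3*(z 1) ^ 2 + q⁻¹ ^ 3*q*w ^ 4*(z 0) ^ 4*(z 2) - (q⁻¹ ^ 3*q*w ^ 4*(z 0) ^ 4*(z 1)) + q⁻¹ ^ 3*q*w ^ 6*(z 1)*(z 2) ^ 2 - (q⁻¹ ^ 3*q*w ^ 6*(z 1) ^ 2*(z 2)) - (q⁻¹ ^ 3*q*w ^ 6*(z 0)*(z 2) ^ 2) + q⁻¹ ^ 3*q*w ^ 6*(z 0)*(z 1) ^ 2 + q⁻¹ ^ 3*q*w ^ 6*(z 0) ^ 2*(z 2) - (q⁻¹ ^ 3*q*w ^ 6*(z 0) ^ 2*(z 1)) + q⁻¹ ^ 6*(z 0) ^ 2*(z 1) ^ 3*(z 2) ^ 4 -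 (q⁻¹ ^ 6*(z 0) ^ 2*(z 1) ^ 4*(z 2) ^ 3) - (q⁻¹ ^ 6*(z 0) ^ 3*(z 1) ^ 2*(z 2) ^ 4) + q⁻¹ ^ 6*(z 0) ^ 3*(z 1) ^ 4*(z 2) ^ 2 + q⁻¹ ^ 6*(z 0) ^ 4*(z 1) ^ 2*(z 2) ^ 3 - (q⁻¹ ^ 6*(z 0) ^ 4*(z 1) ^ 3*(z 2) ^ 2) + q⁻¹ ^ 6*w ^ 2*(z 1) ^ 3*(z 2) ^ 4 - (q⁻¹ ^ 6*w ^ 2*(z 1) ^ 4*(z 2) ^ 3) - (q⁻¹ ^ 6*w ^ 2*(z 0)*(z 1) ^ 2*(z 2) ^ 4) + q⁻¹ ^ 6*w ^ 2*(z 0)*(z 1) ^ 4*(z 2) ^ 2 + q⁻¹ ^ 6*w ^ 2*(z 0) ^ 2*(z 1)*(z 2) ^ 4 - (q⁻¹ ^ 6*w ^ 2*(z 0) ^ 2*(z 1) ^ 4*(z 2)) - (q⁻¹ ^ 6*w ^ 2*(z 0) ^ 3*(z 2) ^ 4) + q⁻¹ ^ 6*w ^ 2*(z 0) ^ 3*(z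 1) ^ 4 + q⁻¹ ^ 6*w ^ 2*(z 0) ^ 4*(z 2) ^ 3 - (q⁻¹ ^ 6*w ^ 2*(z 0) ^ 4*(z 1)*(z 2) ^ 2) + q⁻¹ ^ 6*w ^ 2*(z 0) ^ 4*(z 1) ^ 2*(z 2) - (q⁻¹ ^ 6*w ^ 2*(z 0) ^ 4*(z 1) ^ 3) - (q⁻¹ ^ 6*w ^ 4*(z 1)*(z 2) ^ 4) + q⁻¹ ^ 6*w ^ 4*(z 1) ^ 2*(z 2) ^ 3 - (q⁻¹ ^ 6*w ^ 4*(z 1) ^ 3*(z 2) ^ 2) + q⁻¹ ^ 6*w ^ 4*(z 1) ^ 4*(z 2) + q⁻¹ ^ 6*w ^ 4*(z 0)*(z 2) ^ 4 - (q⁻¹ ^ 6*w ^ 4*(z 0)*(z 1) ^ 4) - (q⁻¹ ^ 6*w ^ 4*(z 0) ^ 2*(z 2) ^ 3) + q⁻¹ ^ 6*w ^ 4*(z 0) ^ 2*(z 1) ^ 3 + q⁻¹ ^ 6*w ^ 4*(z 0) ^ 3*(z 2) ^ 2 - (q⁻¹ ^ 6*w ^ 4*(z 0) ^ 3*(z 1)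 ^ 2) - (q⁻¹ ^ 6*w ^ 4*(z 0) ^ 4*(z 2)) + q⁻¹ ^ 6*w ^ 4*(z 0) ^ 4*(z 1) - (q⁻¹ ^ 6*w ^ 6*(z 1)*(z 2) ^ 2) + q⁻¹ ^ 6*w ^ 6*(z 1) ^ 2*(z 2) + q⁻¹ ^ 6*w ^ 6*(z 0)*(z 2) ^ 2 - (q⁻¹ ^ 6*w ^ 6*(z 0)*(z 1) ^ 2) - (q⁻¹ ^ 6*w ^ 6*(z 0) ^ 2*(z 2)) + q⁻¹ ^ 6*w ^ 6*(z 0) ^ 2*(z 1) + q⁻¹ ^ 7*q*(z 0) ^ 2*(z 1) ^ 3*(z 2) ^ 4 - (q⁻¹ ^ 7*q*(z 0) ^ 2*(z 1) ^ 4*(z 2) ^ 3) - (q⁻¹ ^ 7*q*(z 0) ^ 3*(z 1) ^ 2*(z 2) ^ 4) + q⁻¹ ^ 7*q*(z 0) ^ 3*(z 1) ^ 4*(z 2) ^ 2 + q⁻¹ ^ 7*q*(z 0) ^ 4*(z 1) ^ 2*(z 2) ^ 3 - (q⁻¹ ^ 7*q*(z 0) ^ 4*(z 1) ^ 3*(z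 2) ^ 2) + q⁻¹ ^ 7*q*w ^ 2*(z 1) ^ 3*(z 2) ^ 4 - (q⁻¹ ^ 7*q*w ^ 2*(z 1) ^ 4*(z 2) ^ 3) - (q⁻¹ ^ 7*q*w ^ 2*(z 0)*(z 1) ^ 2*(z 2) ^ 4) + q⁻¹ ^ 7*q*w ^ 2*(z 0)*(z 1) ^ 4*(z 2) ^ 2 + q⁻¹ ^ 7*q*w ^ 2*(z 0) ^ 2*(z 1)*(z 2) ^ 4 - (q⁻¹ ^ 7*q*w ^ 2*(z 0) ^ 2*(z 1) ^ 4*(z 2)) - (q⁻¹ ^ 7*q*w ^ 2*(z 0) ^ 3*(z 2) ^ 4) + q⁻¹ ^ 7*q*w ^ 2*(z 0) ^ 3*(z 1) ^ 4 + q⁻¹ ^ 7*q*w ^ 2*(z 0) ^ 4*(z 2) ^ 3 - (q⁻¹ ^ 7*q*w ^ 2*(z 0) ^ 4*(z 1)*(z 2) ^ 2) + q⁻¹ ^ 7*q*w ^ 2*(z 0) ^ 4*(z 1) ^ 2*(z 2) - (q⁻¹ ^ 7*q*w ^ 2*(z 0) ^ 4*(z 1) ^ 3) - (q⁻¹ ^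 7*q*w ^ 4*(z 1)*(z 2) ^ 4) + q⁻¹ ^ 7*q*w ^ 4*(z 1) ^ 2*(z 2) ^ 3 - (q⁻¹ ^ 7*q*w ^ 4*(z 1) ^ 3*(z 2) ^ 2) + q⁻¹ ^ 7*q*w ^ 4*(z 1) ^ 4*(z 2) + q⁻¹ ^ 7*q*w ^ 4*(z 0)*(z 2) ^ 4 - (q⁻¹ ^ 7*q*w ^ 4*(z 0)*(z 1) ^ 4) - (q⁻¹ ^ 7*q*w ^ 4*(z 0) ^ 2*(z 2) ^ 3) + q⁻¹ ^ 7*q*w ^ 4*(z 0) ^ 2*(z 1) ^ 3 + q⁻¹ ^ 7*q*w ^ 4*(z 0) ^ 3*(z 2) ^ 2 - (q⁻¹ ^ 7*q*w ^ 4*(z 0) ^ 3*(z 1) ^ 2) - (q⁻¹ ^ 7*q*w ^ 4*(z 0) ^ 4*(z 2)) + q⁻¹ ^ 7*q*w ^ 4*(z 0) ^ 4*(z 1) - (q⁻¹ ^ 7*q*w ^ 6*(z 1)*(z 2) ^ 2) + q⁻¹ ^ 7*q*w ^ 6*(z 1) ^ 2*(z 2) + q⁻¹ ^ 7*q*w ^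 6*(z 0)*(z 2) ^ 2 - (q⁻¹ ^ 7*q*w ^ 6*(z 0)*(z 1) ^ 2) - (q⁻¹ ^ 7*q*w ^ 6*(z 0) ^ 2*(z 2)) + q⁻¹ ^ 7*q*w ^ 6*(z 0) ^ 2*(z 1) + q⁻¹ ^ 8*(z 0) ^ 2*(z 1) ^ 3*(z 2) ^ 4 - (q⁻¹ ^ 8*(z 0) ^ 2*(z 1) ^ 4*(z 2) ^ 3) - (q⁻¹ ^ 8*(z 0) ^ 3*(z 1) ^ 2*(z 2) ^ 4) + q⁻¹ ^ 8*(z 0) ^ 3*(z 1) ^ 4*(z 2) ^ 2 + q⁻¹ ^ 8*(z 0) ^ 4*(z 1) ^ 2*(z 2) ^ 3 - (q⁻¹ ^ 8*(z 0) ^ 4*(z 1) ^ 3*(z 2) ^ 2) - (q⁻¹ ^ 8*w ^ 6*(z 1)*(z 2) ^ 2) + q⁻¹ ^ 8*w ^ 6*(z 1) ^ 2*(z 2) + q⁻¹ ^ 8*w ^ 6*(z 0)*(z 2) ^ 2 - (q⁻¹ ^ 8*w ^ 6*(z 0)*(z 1) ^ 2) - (q⁻¹ ^ 8*w ^ 6*(z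 0) ^ 2*(z 2)) + q⁻¹ ^ 8*w ^ 6*(z 0) ^ 2*(z 1) + q⁻¹ ^ 9*q*(z 0) ^ 2*(z 1) ^ 3*(z 2) ^ 4 - (q⁻¹ ^ 9*q*(z 0) ^ 2*(z 1) ^ 4*(z 2) ^ 3) - (q⁻¹ ^ 9*q*(z 0) ^ 3*(z 1) ^ 2*(z 2) ^ 4) + q⁻¹ ^ 9*q*(z 0) ^ 3*(z 1) ^ 4*(z 2) ^ 2 + q⁻¹ ^ 9*q*(z 0) ^ 4*(z 1) ^ 2*(z 2) ^ 3 - (q⁻¹ ^ 9*q*(z 0) ^ 4*(z 1) ^ 3*(z 2) ^ 2) - (q⁻¹ ^ 9*q*w ^ 6*(z 1)*(z 2) ^ 2) + q⁻¹ ^ 9*q*w ^ 6*(z 1) ^ 2*(z 2) + q⁻¹ ^ 9*q*w ^ 6*(z 0)*(z 2) ^ 2 - (q⁻¹ ^ 9*q*w ^ 6*(z 0)*(z 1) ^ 2) - (q⁻¹ ^ 9*q*w ^ 6*(z 0) ^ 2*(z 2)) + q⁻¹ ^ 9*q*w ^ 6*(z 0) ^ 2*(z 1)) * (mul_inv_cancel₀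 hq)
end

section
/- With the operators h_{0m} ↦ (q^{|m|/2}ε₁(m) − q^{−|m|/2}ε₂(m))·[m]/m and h_{1m} ↦ (q^{|m|/2}ε₂(m) − (−1)^m q^{−|m|/2}ε₁(m))·d^{−m}·[m]/m acting on the Fock space (where C acts as 1), the commutator [h_{1m}, h_{0n}] equals −([m]/m)·[m]·(d^m + d^{−m})·δ_{m,−n}, where d² = −1 and [m] = (q^m−q^{−m})/(q−q^{−1}). -/
private lemma fock_aux (M Q S1 S2 D1 D2 E : ℂ) (hM : M ≠ 0) (hS : S1 * S2 = 1)
    (hD : E * D2 = D1) :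
    -(D2 * Q / M * (-Q / -M) * (S1 * S2 * M)) - D2 * Q / M * (-Q / -M) * (E * S2 * S1 * M)
      = -(Q / M) * Q * (D1 + D2) := by
  field_simp
  linear_combination (-(Q^2) * (D1 + D2)) * hS + (-(Q^2) * S1 * S2) * hD

/-- With `h_{0m} = (q^{|m|/2}ε₁(m) − q^{−|m|/2}ε₂(m))·[m]/m` and
`h_{1m} = (q^{|m|/2}ε₂(m) − (−1)^m q^{−|m|/2}ε₁(m))·d^{−m}·[m]/m` acting on the Fock
space with `C = 1`, one has `[h_{1m}, h_{0n}] = −([m]/m)·[m]·(d^m + d^{−m})·δ_{m,−n}`,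
where `d = −i` and `[m] = (q^m − q^{−m})/(q − q⁻¹)`.  Here `s = q^{1/2}` is a fixed
square root of `q`, the Fock space is an arbitrary complex vector space `V`, and the
Heisenberg generators act as endomorphisms `ε i n` of `V`. -/
theorem fock_heisenberg_commutator
    {V : Type*} [AddCommGroup V] [Module ℂ V]
    (q s : ℂ) (hq : q ≠ 0) (hs : s ^ 2 = q)
    (hroot : ∀ k : ℕ, k ≠ 0 → q ^ k ≠ 1)
    (ε : Fin 2 → ℤ → Module.End ℂ V)
    (hcomm : ∀ (i j : Fin 2) (m n : ℤ), m ≠ 0 → n ≠ 0 →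
      ε i m * ε j n - ε j n * ε i m =
        if i = j ∧ m + n = 0 then (m : ℂ) • (1 : Module.End ℂ V) else 0) :
    let d : ℂ := -Complex.I
    let qint : ℤ → ℂ := fun m => (q ^ m - q ^ (-m)) / (q - q⁻¹)
    let h0 : ℤ → Module.End ℂ V := fun n =>
      (qint n / (n : ℂ)) • (s ^ (|n| : ℤ) • ε 0 n - s ^ (-(|n| : ℤ)) • ε 1 n)
    let h1 : ℤ → Module.End ℂ V := fun m =>
      (d ^ (-m) * qint m / (m : ℂ)) •
        (s ^ (|m| : ℤ) • ε 1 m - ((-1 : ℂ) ^ m * s ^ (-(|m| : ℤ))) • ε 0 m)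
    ∀ m n : ℤ, m ≠ 0 → n ≠ 0 →
      h1 m * h0 n - h0 n * h1 m =
        if m + n = 0 then
          (-(qint m / (m : ℂ)) * qint m * (d ^ m + d ^ (-m))) • (1 : Module.End ℂ V)
        else 0 := by
  intro d qint h0 h1 m n hm hn
  have hs0 : s ≠ 0 := by
    intro h; apply hq; rw [← hs, h]; ring
  have brk : ∀ (a b c e : ℂ) (A B C D : Module.End ℂ V),
      (a•A - b•B)*(c•C - e•D) - (c•C - e•D)*(a•A - b•B)
      = (a*c)•(A*C - C*A) - (a*e)•(A*D - D*A) - (b*c)•(B*C - C*B) + (b*e)•(B*D - D*B) := by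
    intros
    simp only [sub_mul, mul_sub, smul_mul_assoc, mul_smul_comm, smul_smul, smul_sub]
    module
  have comm2 : ∀ (a b : ℂ) (X Y : Module.End ℂ V),
      (a•X)*(b•Y) - (b•Y)*(a•X) = (a*b)•(X*Y - Y*X) := by
    intros a b X Y
    simp only [smul_mul_assoc, mul_smul_comm, smul_smul, smul_sub, mul_comm]
  show (_ • _) * (_ • _) - (_ • _) * (_ • _) = _
  rw [comm2, brk, hcomm 1 0 m n hm hn, hcomm 1 1 m n hm hn,
      hcomm 0 0 m n hm hn, hcomm 0 1 m n hm hn]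
  by_cases h : m + n = 0
  · have hn' : n = -m := by omega
    have habs : |n| = |m| := by rw [hn', abs_neg]
    have hqn : qint n = -qint m := by
      simp only [qint, hn', neg_neg]
      ring
    have hsmul : s ^ (|m| : ℤ) * s ^ (-(|m| : ℤ)) = 1 := by
      rw [← zpow_add₀ hs0]; simp
    have hd2 : d ^ (2:ℤ) = -1 := by
      simp only [d]
      norm_num [zpow_two]
    have hdm : (-1 : ℂ) ^ m * d ^ (-m) = d ^ m := by
      have : ((-1 : ℂ)) ^ m = d ^ (2*m) := by
        rw [← hd2, ← zpow_mul]
      rw [this, ← zpow_add₀ (by simp [d, Complex.I_ne_zero] : d ≠ 0)]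
      ring_nf
    rw [if_neg (by simp : ¬((1:Fin 2) = 0 ∧ m + n = 0)),
      if_neg (by simp : ¬((0:Fin 2) = 1 ∧ m + n = 0)),
      if_pos (⟨rfl, h⟩ : (1:Fin 2) = 1 ∧ m + n = 0),
      if_pos (⟨rfl, h⟩ : (0:Fin 2) = 0 ∧ m + n = 0), if_pos h]
    simp only [smul_zero, zero_sub, add_zero, smul_smul, smul_sub, smul_neg]
    rw [← neg_smul, ← sub_smul]
    congr 1
    rw [habs, hqn, hn']
    push_cast
    exact fock_aux (m:ℂ) (qint m) (s ^ |m|) (s ^ (-|m|)) (d ^ m) (d ^ (-m)) ((-1:ℂ) ^ m)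
      (Int.cast_ne_zero.mpr hm) hsmul hdm
  · rw [if_neg (by simp [h] : ¬((1:Fin 2) = 0 ∧ m + n = 0)),
      if_neg (by simp [h] : ¬((0:Fin 2) = 1 ∧ m + n = 0)),
      if_neg (by simp [h] : ¬((1:Fin 2) = 1 ∧ m + n = 0)),
      if_neg (by simp [h] : ¬((0:Fin 2) = 0 ∧ m + n = 0)), if_neg h]
    simp
end

section
/- The TKK Lie algebra bracket is antisymmetric and satisfies the Jacobi identity: for a Jordan algebra J over F, the space K(J) = (sl₂(F) ⊗ J) ⊕ D_{J,J} with bracket [A⊗a, B⊗b] = [A,B]⊗(ab) + 2·tr(AB)·D_{a,b}, [D, A⊗a] = A⊗(Da), and the commutator bracket on D_{J,J}, is a Lie algebra. -/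
open scoped TensorProduct

section TkkAux

theorem tkk_polar (F : Type*) [Field F] [CharZero F]
    {J : Type*} [NonUnitalNonAssocCommRing J] [Module F J]
    [SMulCommClass F J J] [IsScalarTower F J J] (hJordan : ∀ a b : J, (a * b) * (a * a) = a * (b * (a * a)))
    (x1 x2 x3 y : J) :
    (x1*y)*(x2*x3) + (x2*y)*(x1*x3) + (x3*y)*(x1*x2)
      = x1*(y*(x2*x3)) + x2*(y*(x1*x3)) + x3*(y*(x1*x2)) := by
  have h1 := hJordan (x1+x2+x3) y
  have h2 := hJordan (x1+x2) y
  have h3 := hJordan (x1+x3) y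
  have h4 := hJordan (x2+x3) y
  have h5 := hJordan x1 y
  have h6 := hJordan x2 y
  have h7 := hJordan x3 y
  have G2 : ((x1*y)*(x2*x3) + (x2*y)*(x1*x3) + (x3*y)*(x1*x2))
      + ((x1*y)*(x2*x3) + (x2*y)*(x1*x3) + (x3*y)*(x1*x2))
      = (x1*(y*(x2*x3)) + x2*(y*(x1*x3)) + x3*(y*(x1*x2)))
      + (x1*(y*(x2*x3)) + x2*(y*(x1*x3)) + x3*(y*(x1*x2))) := by
    linear_combination (norm := (simp only [mul_add, add_mul]; simp only [mul_comm]; abel))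
      h1 - h2 - h3 - h4 + h5 + h6 + h7
  have hz := sub_eq_zero.mpr G2
  rw [show ∀ u v : J, (u + u) - (v + v) = (2:F) • (u - v) by intros; rw [two_smul]; abel] at hz
  have h0 := (smul_eq_zero.mp hz).resolve_left (by norm_num)
  exact sub_eq_zero.mp h0

/-- derivation identity for generators (pointwise):  D_{a,b}(cd) = (D_{a,b}c)d + c(D_{a,b}d) -/
theorem tkk_der (F : Type*) [Field F] [CharZero F]
    {J : Type*} [NonUnitalNonAssocCommRing J] [Module F J]
    [SMulCommClass F J J] [IsScalarTower F J J] (hJordan : ∀ a b : J, (a * b) * (a * a) = a * (b * (a * a)))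
    (a b c d : J) :
    a*(b*(c*d)) - b*(a*(c*d)) = (a*(b*c) - b*(a*c))*d + c*(a*(b*d) - b*(a*d)) := by
  have p1 := tkk_polar F hJordan a c d b
  have p2 := tkk_polar F hJordan b c d a
  linear_combination (norm := (simp only [mul_add, add_mul, sub_mul, mul_sub]; simp only [mul_comm]; abel))
    p2 - p1

/-- the identity D_{a,bc} + D_{b,ca} + D_{c,ab} = 0, pointwise -/
theorem tkk_I (F : Type*) [Field F] [CharZero F]
    {J : Type*} [NonUnitalNonAssocCommRing J] [Module F J]
    [SMulCommClass F J J] [IsScalarTower F J J] (hJordan : ∀ a b : J, (a * b) * (a * a) = a * (b * (a * a)))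
    (a b c y : J) :
    (a*((b*c)*y) - (b*c)*(a*y)) + (b*((c*a)*y) - (c*a)*(b*y))
      + (c*((a*b)*y) - (a*b)*(c*y)) = 0 := by
  have p := tkk_polar F hJordan a b c y
  linear_combination (norm := (simp only [mul_comm]; abel)) -p

end TkkAux

section MatAux

variable {F : Type*} [Field F]

theorem tkk_mat (A B C : Matrix (Fin 2) (Fin 2) F)
    (hA : A.trace = 0) (hB : B.trace = 0) (hC : C.trace = 0) :
    A*(B*C - C*B) - (B*C - C*B)*A
      = (2 * (A*B).trace) • C - (2 * (C*A).trace) • B := by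
  rw [Matrix.trace_fin_two] at hA hB hC
  have hA' : A 1 1 = -A 0 0 := by linear_combination hA
  have hB' : B 1 1 = -B 0 0 := by linear_combination hB
  have hC' : C 1 1 = -C 0 0 := by linear_combination hC
  ext i j
  fin_cases i <;> fin_cases j <;>
    simp [Matrix.trace_fin_two, Matrix.mul_apply, Fin.sum_univ_two, hA', hB', hC'] <;> ring

theorem tkk_tr3 (X Y Z : Matrix (Fin 2) (Fin 2) F) :
    (Y*(Z*X - X*Z)).trace = (X*(Y*Z - Z*Y)).trace := by
  simp only [Matrix.trace_fin_two, Matrix.mul_apply, Matrix.sub_apply, Fin.sum_univ_two,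
    Matrix.mul_sub, Matrix.sub_apply]
  ring

theorem tkk_tr3b (X Y Z : Matrix (Fin 2) (Fin 2) F) :
    (Z*(X*Y - Y*X)).trace = (X*(Y*Z - Z*Y)).trace := by
  simp only [Matrix.trace_fin_two, Matrix.mul_apply, Matrix.sub_apply, Fin.sum_univ_two,
    Matrix.mul_sub, Matrix.sub_apply]
  ring

end MatAux

set_option maxHeartbeats 2000000 in
/-- For a Jordan algebra `J` over a field `F` of characteristic 0, the space
`K(J) = (sl₂(F) ⊗ J) ⊕ D_{J,J}` with bracket `[A⊗a, B⊗b] = [A,B]⊗(ab) + 2·tr(AB)·D_{a,b}`,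
`[D, A⊗a] = A⊗(Da)` (and `[A⊗a, D] = −A⊗(Da)`), and the commutator bracket on `D_{J,J}`,
is a Lie algebra: the bracket is alternating (hence antisymmetric) and satisfies the
Jacobi identity.  Here the bracket is any `F`-bilinear map taking the prescribed values
on generators. -/
theorem tkk_is_lie_algebra {F : Type*} [Field F] [CharZero F]
    {J : Type*} [NonUnitalNonAssocCommRing J] [Module F J]
    [SMulCommClass F J J] [IsScalarTower F J J]
    (hJordan : ∀ a b : J, (a * b) * (a * a) = a * (b * (a * a))) :
    ∀ (L : J → Module.End F J), L = (fun a => LinearMap.mulLeft F a) →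
    ∀ (Din : J → J → Module.End F J), Din = (fun a b => L a * L b - L b * L a) →
    ∀ (DJJ : Submodule F (Module.End F J)),
      DJJ = Submodule.span F {T : Module.End F J | ∃ a b : J, T = Din a b} →
    ∀ (Br : ((LieAlgebra.SpecialLinear.sl (Fin 2) F ⊗[F] J) × DJJ) →ₗ[F]
            ((LieAlgebra.SpecialLinear.sl (Fin 2) F ⊗[F] J) × DJJ) →ₗ[F]
            ((LieAlgebra.SpecialLinear.sl (Fin 2) F ⊗[F] J) × DJJ)),
      (∀ (A B : LieAlgebra.SpecialLinear.sl (Fin 2) F) (a b : J)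
          (hab : (Din a b : Module.End F J) ∈ DJJ),
        Br (A ⊗ₜ a, 0) (B ⊗ₜ b, 0) =
          (⁅A, B⁆ ⊗ₜ (a * b),
           (2 * Matrix.trace ((A : Matrix (Fin 2) (Fin 2) F) * (B : Matrix (Fin 2) (Fin 2) F)))
             • (⟨Din a b, hab⟩ : DJJ))) →
      (∀ (T : DJJ) (A : LieAlgebra.SpecialLinear.sl (Fin 2) F) (a : J),
        Br (0, T) (A ⊗ₜ a, 0) = (A ⊗ₜ ((T : Module.End F J) a), 0)) →
      (∀ (T : DJJ) (A : LieAlgebra.SpecialLinear.sl (Fin 2) F) (a : J),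
        Br (A ⊗ₜ a, 0) (0, T) = (-(A ⊗ₜ ((T : Module.End F J) a)), 0)) →
      (∀ T₁ T₂ : DJJ,
        (Br (0, T₁) (0, T₂)).1 = 0 ∧
        ((Br (0, T₁) (0, T₂)).2 : Module.End F J) =
          (T₁ : Module.End F J) * T₂ - (T₂ : Module.End F J) * T₁) →
      (∀ x, Br x x = 0) ∧
      (∀ x y, Br x y = -Br y x) ∧
      (∀ x y z, Br x (Br y z) = Br (Br x y) z + Br y (Br x z)) := by
  intro L hL Din hDin DJJ hDJJ Br hT hDT hTD hDD
  -- pointwise facts about Din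
  have hDinapp : ∀ a b y : J, Din a b y = a*(b*y) - b*(a*y) := by
    subst hL; subst hDin; intro a b y; rfl
  have memD : ∀ a b : J, Din a b ∈ DJJ := by
    subst hDJJ; exact fun a b => Submodule.subset_span ⟨a, b, rfl⟩
  have hanti : ∀ a b : J, Din b a = -Din a b := by
    subst hDin; intro a b; simp
  have hderG : ∀ a b c d : J, Din a b (c*d) = (Din a b c)*d + c*(Din a b d) := by
    intro a b c d
    rw [hDinapp, hDinapp, hDinapp]
    exact tkk_der F hJordan a b c d
  have hderAll : ∀ x : Module.End F J,
      x ∈ Submodule.span F {S : Module.End F J | ∃ a b : J, S = Din a b} →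
      ∀ c d : J, x (c*d) = x c * d + c * x d := by
    intro x hx
    refine Submodule.span_induction
      (p := fun x _ => ∀ c d : J, x (c*d) = x c * d + c * x d) ?_ ?_ ?_ ?_ hx
    · rintro y ⟨a, b, rfl⟩ c d; exact hderG a b c d
    · intro c d; simp
    · intro u v _ _ hu hv c d
      simp only [LinearMap.add_apply, hu c d, hv c d, add_mul, mul_add]; abel
    · intro r u _ hu c d
      simp only [LinearMap.smul_apply, hu c d, smul_add, smul_mul_assoc, mul_smul_comm]
  have hder : ∀ T : DJJ, ∀ c d : J,
      (T : Module.End F J) (c*d)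
        = ((T : Module.End F J) c)*d + c*((T : Module.End F J) d) :=
    fun T => hderAll _ (hDJJ ▸ T.2)
  have hcomm : ∀ S : Module.End F J, (∀ c d : J, S (c*d) = S c * d + c * S d) →
      ∀ a b : J, S * Din a b - Din a b * S = Din (S a) b + Din a (S b) := by
    intro S hS a b
    apply LinearMap.ext; intro y
    simp only [LinearMap.sub_apply, LinearMap.add_apply, Module.End.mul_apply, hDinapp,
      map_sub, hS, mul_add]
    abel
  have hE1 : ∀ a b c : J, Din a (b*c) + Din b (c*a) + Din c (a*b) = 0 := by
    intro a b c
    apply LinearMap.ext; intro y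
    simp only [LinearMap.add_apply, LinearMap.zero_apply, hDinapp]
    linear_combination (norm := abel) tkk_I F hJordan a b c y
  -- matrix facts
  have htr0 : ∀ A : LieAlgebra.SpecialLinear.sl (Fin 2) F,
      (A : Matrix (Fin 2) (Fin 2) F).trace = 0 := fun A => LinearMap.mem_ker.mp A.2
  have hm2 : ∀ A B C : LieAlgebra.SpecialLinear.sl (Fin 2) F,
      ⁅A, ⁅B, C⁆⁆ = (2 * ((A : Matrix (Fin 2) (Fin 2) F)
          * (B : Matrix (Fin 2) (Fin 2) F)).trace) • C
        - (2 * ((C : Matrix (Fin 2) (Fin 2) F)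
          * (A : Matrix (Fin 2) (Fin 2) F)).trace) • B :=
    fun A B C => Subtype.ext (tkk_mat _ _ _ (htr0 A) (htr0 B) (htr0 C))
  -- membership of commutators
  have memComm : ∀ S T : DJJ,
      ((S : Module.End F J) * T - (T : Module.End F J) * S) ∈ DJJ :=
    fun S T => (hDD S T).2 ▸ (Br (0, S) (0, T)).2.2
  have hDD' : ∀ S T : DJJ, Br (0, S) (0, T)
      = (0, ⟨(S : Module.End F J) * T - (T : Module.End F J) * S, memComm S T⟩) :=
    fun S T => Prod.ext (hDD S T).1 (Subtype.ext (hDD S T).2)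
  -- the master bracket formula
  have hsplit : ∀ (p : LieAlgebra.SpecialLinear.sl (Fin 2) F ⊗[F] J) (U : DJJ),
      ((p, U) : _ × DJJ) = (p, 0) + (0, U) := by intro p U; simp
  have brAll : ∀ (A B : LieAlgebra.SpecialLinear.sl (Fin 2) F) (a b : J) (S T : DJJ),
      Br (A ⊗ₜ a, S) (B ⊗ₜ b, T)
        = (⁅A, B⁆ ⊗ₜ (a*b) - A ⊗ₜ ((T : Module.End F J) a) + B ⊗ₜ ((S : Module.End F J) b),
           (2 * ((A : Matrix (Fin 2) (Fin 2) F) * (B : Matrix (Fin 2) (Fin 2) F)).trace)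
             • (⟨Din a b, memD a b⟩ : DJJ)
           + ⟨(S : Module.End F J) * T - (T : Module.End F J) * S, memComm S T⟩) := by
    intro A B a b S T
    rw [hsplit (A ⊗ₜ a) S, hsplit (B ⊗ₜ b) T]
    simp only [map_add, LinearMap.add_apply]
    rw [hT A B a b (memD a b), hTD, hDT, hDD' S T]
    rw [Prod.ext_iff]
    constructor <;> simp <;> abel
  -- kind: induction over the product space
  have kind : ∀ (P : (LieAlgebra.SpecialLinear.sl (Fin 2) F ⊗[F] J) × DJJ → Prop),
      P 0 → (∀ u v, P u → P v → P (u+v)) →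
      (∀ A a, P (A ⊗ₜ a, 0)) → (∀ T, P (0, T)) → ∀ x, P x := by
    intro P h0 hadd ht hD x
    have hx : x = (x.1, 0) + (0, x.2) := by simp
    rw [hx]
    refine hadd _ _ ?_ (hD x.2)
    induction x.1 using TensorProduct.induction_on with
    | zero => exact h0
    | tmul A a => exact ht A a
    | add u v hu hv =>
        have : ((u + v, 0) : _ × DJJ) = (u, 0) + (v, 0) := by simp
        rw [this]; exact hadd _ _ hu hv
  -- generators as instances of the master form
  have hzero : ((0 : LieAlgebra.SpecialLinear.sl (Fin 2) F ⊗[F] J))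
      = (0 : LieAlgebra.SpecialLinear.sl (Fin 2) F) ⊗ₜ (0 : J) := by
    rw [TensorProduct.zero_tmul]
  -- antisymmetry on master generators
  have antiGen : ∀ (A B : LieAlgebra.SpecialLinear.sl (Fin 2) F) (a b : J) (S T : DJJ),
      Br (A ⊗ₜ a, S) (B ⊗ₜ b, T) + Br (B ⊗ₜ b, T) (A ⊗ₜ a, S) = 0 := by
    intro A B a b S T
    rw [brAll, brAll, Prod.mk_add_mk, Prod.mk_eq_zero]
    constructor
    · rw [show ⁅B, A⁆ = -⁅A, B⁆ from (lie_skew B A).symm, mul_comm b a,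
        TensorProduct.neg_tmul]
      abel
    · apply Subtype.ext
      push_cast
      rw [hanti a b, Matrix.trace_mul_comm]
      simp only [smul_neg]
      abel
  have anti : ∀ x y, Br x y + Br y x = 0 := by
    refine kind _ ?_ ?_ ?_ ?_
    · intro y
      simp only [map_zero, LinearMap.zero_apply, zero_add, add_zero]
    · intro u v hu hv y
      simp only [map_add, LinearMap.add_apply]
      linear_combination (norm := abel) hu y + hv y
    · intro A a
      refine kind _ ?_ ?_ ?_ ?_
      · simp only [map_zero, LinearMap.zero_apply, zero_add, add_zero]
      · intro u v hu hv
        simp only [map_add, LinearMap.add_apply]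
        linear_combination (norm := abel) hu + hv
      · intro B b; exact antiGen A B a b 0 0
      · intro T
        have h1 := antiGen A 0 a 0 0 T
        rwa [← hzero] at h1
    · intro T
      refine kind _ ?_ ?_ ?_ ?_
      · simp only [map_zero, LinearMap.zero_apply, zero_add, add_zero]
      · intro u v hu hv
        simp only [map_add, LinearMap.add_apply]
        linear_combination (norm := abel) hu + hv
      · intro B b
        have h1 := antiGen 0 B 0 b T 0
        rwa [← hzero] at h1
      · intro S
        have h1 := antiGen 0 0 0 0 T S
        rwa [← hzero] at h1
  have antisym : ∀ x y, Br x y = -Br y x :=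
    fun x y => eq_neg_of_add_eq_zero_left (anti x y)
  have alt : ∀ x, Br x x = 0 := by
    intro x
    have h2 : (2 : F) • Br x x = 0 := by rw [two_smul]; exact anti x x
    exact (smul_eq_zero.mp h2).resolve_left (by norm_num)
  -- piecewise bracket formulas
  have brT0 : ∀ (A B : LieAlgebra.SpecialLinear.sl (Fin 2) F) (a b : J) (S : DJJ),
      Br (A ⊗ₜ a, S) (B ⊗ₜ b, 0)
        = (⁅A, B⁆ ⊗ₜ (a*b) + B ⊗ₜ ((S : Module.End F J) b),
           (2 * ((A : Matrix (Fin 2) (Fin 2) F) * (B : Matrix (Fin 2) (Fin 2) F)).trace)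
             • (⟨Din a b, memD a b⟩ : DJJ)) := by
    intro A B a b S
    rw [brAll, Prod.mk.injEq]
    constructor
    · simp
    · apply Subtype.ext
      push_cast
      simp
  have br0R : ∀ (A : LieAlgebra.SpecialLinear.sl (Fin 2) F) (a : J) (S V : DJJ),
      Br (A ⊗ₜ a, S) (0, V)
        = (-(A ⊗ₜ ((V : Module.End F J) a)),
           (⟨(S : Module.End F J) * V - (V : Module.End F J) * S, memComm S V⟩ : DJJ)) := by
    intro A a S V
    rw [show ((0 : LieAlgebra.SpecialLinear.sl (Fin 2) F ⊗[F] J), V)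
        = ((0 : LieAlgebra.SpecialLinear.sl (Fin 2) F) ⊗ₜ (0 : J), V) by rw [← hzero],
      brAll, Prod.mk.injEq]
    constructor
    · simp
    · apply Subtype.ext
      push_cast
      simp
  have brExp : ∀ (A : LieAlgebra.SpecialLinear.sl (Fin 2) F) (a : J) (S : DJJ)
      (p q r : LieAlgebra.SpecialLinear.sl (Fin 2) F ⊗[F] J) (V : DJJ),
      Br (A ⊗ₜ a, S) (p - q + r, V)
        = Br (A ⊗ₜ a, S) (p, 0) - Br (A ⊗ₜ a, S) (q, 0) + Br (A ⊗ₜ a, S) (r, 0)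
          + Br (A ⊗ₜ a, S) (0, V) := by
    intro A a S p q r V
    have h : ((p - q + r, V) : _ × DJJ) = (p, 0) - (q, 0) + (r, 0) + (0, V) := by
      rw [Prod.mk.injEq]; constructor <;> simp
    rw [h]
    simp only [map_add, map_sub]
  have hcoeBr : ∀ X Y : LieAlgebra.SpecialLinear.sl (Fin 2) F,
      ((⁅X, Y⁆ : LieAlgebra.SpecialLinear.sl (Fin 2) F) : Matrix (Fin 2) (Fin 2) F)
        = (X : Matrix (Fin 2) (Fin 2) F) * Y - (Y : Matrix (Fin 2) (Fin 2) F) * X :=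
    fun _ _ => rfl
  -- the master Jacobi computation on generators
  have jacGen : ∀ (A B C : LieAlgebra.SpecialLinear.sl (Fin 2) F) (a b c : J) (S T U : DJJ),
      Br (A ⊗ₜ a, S) (Br (B ⊗ₜ b, T) (C ⊗ₜ c, U))
      + Br (B ⊗ₜ b, T) (Br (C ⊗ₜ c, U) (A ⊗ₜ a, S))
      + Br (C ⊗ₜ c, U) (Br (A ⊗ₜ a, S) (B ⊗ₜ b, T)) = 0 := by
    intro A B C a b c S T U
    rw [brAll B C b c T U, brAll C A c a U S, brAll A B a b S T,
      brExp, brExp, brExp]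
    simp only [brT0, br0R]
    rw [hm2 A B C, hm2 B C A, hm2 C A B]
    simp only [Submodule.coe_add, SetLike.val_smul, LinearMap.add_apply, LinearMap.smul_apply,
      LinearMap.sub_apply, Module.End.mul_apply, ZeroMemClass.coe_zero, LinearMap.zero_apply]
    simp only [hder]
    simp only [hDinapp]
    rw [Prod.ext_iff]
    constructor
    · -- first (tensor) component
      simp only [Prod.fst_add, Prod.fst_sub, Prod.fst_zero]
      rw [(lie_skew C A).symm, (lie_skew C B).symm, (lie_skew B A).symm]
      simp only [TensorProduct.neg_tmul, TensorProduct.tmul_neg, TensorProduct.tmul_add,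
        TensorProduct.tmul_sub, TensorProduct.add_tmul, TensorProduct.sub_tmul,
        TensorProduct.smul_tmul', TensorProduct.tmul_smul, smul_add, smul_sub, neg_neg,
        neg_add, neg_sub]
      simp only [mul_comm]
      module
    · -- second (derivation) component
      simp only [Prod.snd_add, Prod.snd_sub, Prod.snd_zero]
      rw [Subtype.ext_iff]
      push_cast
      try simp only [hcoeBr]
      try simp only [Ring.lie_def]
      rw [tkk_tr3 (A : Matrix (Fin 2) (Fin 2) F) B C,
        tkk_tr3b (A : Matrix (Fin 2) (Fin 2) F) B C,
        Matrix.trace_mul_comm (A : Matrix (Fin 2) (Fin 2) F) C,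
        Matrix.trace_mul_comm (B : Matrix (Fin 2) (Fin 2) F) A,
        Matrix.trace_mul_comm (C : Matrix (Fin 2) (Fin 2) F) B]
      linear_combination (norm := (simp only [mul_sub, sub_mul, mul_add, add_mul, smul_sub,
          smul_add, mul_smul_comm, smul_mul_assoc, mul_assoc]; module))
        (2*((A : Matrix (Fin 2) (Fin 2) F)*((B : Matrix (Fin 2) (Fin 2) F)*C
              - (C : Matrix (Fin 2) (Fin 2) F)*B)).trace) • hE1 a b c
        + (2*((B : Matrix (Fin 2) (Fin 2) F)*C).trace) • hcomm _ (hder S) b c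
        + (2*((C : Matrix (Fin 2) (Fin 2) F)*A).trace) • hcomm _ (hder T) c a
        + (2*((A : Matrix (Fin 2) (Fin 2) F)*B).trace) • hcomm _ (hder U) a b
        + (2*((B : Matrix (Fin 2) (Fin 2) F)*C).trace) • hanti ((S : Module.End F J) b) c
        + (2*((C : Matrix (Fin 2) (Fin 2) F)*A).trace) • hanti ((T : Module.End F J) c) a
        + (2*((A : Matrix (Fin 2) (Fin 2) F)*B).trace) • hanti ((U : Module.End F J) a) b
  have jac0 : ∀ x y z, Br x (Br y z) + Br y (Br z x) + Br z (Br x y) = 0 := by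
    refine kind (fun x => ∀ y z, Br x (Br y z) + Br y (Br z x) + Br z (Br x y) = 0) ?_ ?_ ?_ ?_
    · intro y z
      simp only [map_zero, LinearMap.zero_apply, zero_add, add_zero]
    · intro u v hu hv y z
      simp only [map_add, LinearMap.add_apply]
      linear_combination (norm := abel) hu y z + hv y z
    · intro A a
      refine kind (fun y => ∀ z, Br (A ⊗ₜ a, 0) (Br y z) + Br y (Br z (A ⊗ₜ a, 0))
          + Br z (Br (A ⊗ₜ a, 0) y) = 0) ?_ ?_ ?_ ?_
      · intro z; simp only [map_zero, LinearMap.zero_apply, zero_add, add_zero]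
      · intro u v hu hv z
        simp only [map_add, LinearMap.add_apply]
        linear_combination (norm := abel) hu z + hv z
      · intro B b
        refine kind (fun z => Br (A ⊗ₜ a, 0) (Br (B ⊗ₜ b, 0) z)
            + Br (B ⊗ₜ b, 0) (Br z (A ⊗ₜ a, 0)) + Br z (Br (A ⊗ₜ a, 0) (B ⊗ₜ b, 0)) = 0)
            ?_ ?_ ?_ ?_
        · simp only [map_zero, LinearMap.zero_apply, zero_add, add_zero]
        · intro u v hu hv
          simp only [map_add, LinearMap.add_apply]
          linear_combination (norm := abel) hu + hv
        · intro C c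
          exact jacGen A B C a b c 0 0 0
        · intro U
          have h := jacGen A B 0 a b 0 0 0 U
          rwa [← hzero] at h
      · intro T
        refine kind (fun z => Br (A ⊗ₜ a, 0) (Br (0, T) z)
            + Br (0, T) (Br z (A ⊗ₜ a, 0)) + Br z (Br (A ⊗ₜ a, 0) (0, T)) = 0) ?_ ?_ ?_ ?_
        · simp only [map_zero, LinearMap.zero_apply, zero_add, add_zero]
        · intro u v hu hv
          simp only [map_add, LinearMap.add_apply]
          linear_combination (norm := abel) hu + hv
        · intro C c
          have h := jacGen A 0 C a 0 c 0 T 0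
          rwa [← hzero] at h
        · intro U
          have h := jacGen A 0 0 a 0 0 0 T U
          rwa [← hzero] at h
    · intro T
      refine kind (fun y => ∀ z, Br (0, T) (Br y z) + Br y (Br z (0, T))
          + Br z (Br (0, T) y) = 0) ?_ ?_ ?_ ?_
      · intro z; simp only [map_zero, LinearMap.zero_apply, zero_add, add_zero]
      · intro u v hu hv z
        simp only [map_add, LinearMap.add_apply]
        linear_combination (norm := abel) hu z + hv z
      · intro B b
        refine kind (fun z => Br (0, T) (Br (B ⊗ₜ b, 0) z)
            + Br (B ⊗ₜ b, 0) (Br z (0, T)) + Br z (Br (0, T) (B ⊗ₜ b, 0)) = 0) ?_ ?_ ?_ ?_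
        · simp only [map_zero, LinearMap.zero_apply, zero_add, add_zero]
        · intro u v hu hv
          simp only [map_add, LinearMap.add_apply]
          linear_combination (norm := abel) hu + hv
        · intro C c
          have h := jacGen 0 B C 0 b c T 0 0
          rwa [← hzero] at h
        · intro U
          have h := jacGen 0 B 0 0 b 0 T 0 U
          rwa [← hzero] at h
      · intro S
        refine kind (fun z => Br (0, T) (Br (0, S) z)
            + Br (0, S) (Br z (0, T)) + Br z (Br (0, T) (0, S)) = 0) ?_ ?_ ?_ ?_
        · simp only [map_zero, LinearMap.zero_apply, zero_add, add_zero]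
        · intro u v hu hv
          simp only [map_add, LinearMap.add_apply]
          linear_combination (norm := abel) hu + hv
        · intro C c
          have h := jacGen 0 0 C 0 0 c T S 0
          rwa [← hzero] at h
        · intro U
          have h := jacGen 0 0 0 0 0 0 T S U
          rwa [← hzero] at h
  refine ⟨alt, antisym, ?_⟩
  intro x y z
  have h := jac0 x y z
  have e1 := anti (Br x y) z
  have e2 : Br y (Br x z) + Br y (Br z x) = 0 := by
    rw [antisym x z, map_neg]; abel
  linear_combination (norm := abel) h - e1 - e2
end
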